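/- For every natural number n ≥ 0, write r = 2^n. In the polynomial ring ℤ[v, s₁, s₂, u₁, u₂], the element (s₂ − s₁·u₁² + v·s₁·u₁ + u₂)^(2^(n+4)) minus the sum s₂^(16r) + 4·s₁^(4r)·s₂^(12r)·u₁^(8r) + 4·s₂^(12r)·u₂^(4r) + 6·s₁^(8r)·s₂^(8r)·u₁^(16r) + 4·s₁^(4r)·s₂^(8r)·u₁^(8r)·u₂^(4r) + 6·s₂^(8r)·u₂^(8r) + 4·s₁^(12r)·s₂^(4r)·u₁^(24r) + 4·s₁^(8r)·s₂^(4r)·u₁^(16r)·u₂^(4r) + 4·s₁^(4r)·s₂^(4r)·u₁^(8r)·u₂^(8r) + 4·s₂^(4r)·u₂^(12r) + s₁^(16r)·u₁^(32r) + 4·s₁^(12r)·u₁^(24r)·u₂^(4r) + 6·s₁^(8r)·u₁^(16r)·u₂^(8r) + 4·s₁^(4r)·u₁^(8r)·u₂^(12r) + u₂^(16r) lies in the ideal of ℤ[v, s₁, s₂, u₁, u₂] generated by 8 and v⁴. -/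
import Mathlib


open MvPolynomial

private lemma sq_zero_pow {R : Type*} [CommRing R] (x d : R) (hd : d ^ 2 = 0) :
    ∀ m : ℕ, (x + d) ^ (m + 1) = x ^ (m + 1) + ((m + 1 : ℕ) : R) * x ^ m * d := by
  intro m
  induction m with
  | zero => push_cast; ring
  | succ m ih =>
      have h : (x + d) ^ (m + 1 + 1) = (x + d) * (x + d) ^ (m + 1) := by ring
      rw [h, ih]
      push_cast
      linear_combination (((m : R) + 1) * x ^ m) * hd

private lemma two_dvd_sq {R : Type*} [CommRing R] {a b : R} (h : (2 : R) ∣ a - b) :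
    (2 : R) ∣ a ^ 2 - b ^ 2 := by
  obtain ⟨t, ht⟩ := h
  exact ⟨t * (a + b), by linear_combination (a + b) * ht⟩

private lemma eight_dvd_pow_four {R : Type*} [CommRing R] {a b : R} (h : (2 : R) ∣ a - b) :
    (8 : R) ∣ a ^ 4 - b ^ 4 := by
  obtain ⟨t, ht⟩ := h
  have ha : a = b + 2 * t := by linear_combination ht
  exact ⟨b ^ 3 * t + 3 * b ^ 2 * t ^ 2 + 4 * b * t ^ 3 + 2 * t ^ 4, by rw [ha]; ring⟩

private lemma frob3 {R : Type*} [CommRing R] {x y z w : R} (h : (2 : R) ∣ w - (x + y + z)) :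
    ∀ k : ℕ, (2 : R) ∣ w ^ (2 ^ k) - (x ^ (2 ^ k) + y ^ (2 ^ k) + z ^ (2 ^ k)) := by
  intro k
  induction k with
  | zero => simpa using h
  | succ k ih =>
      have h1 := two_dvd_sq ih
      have h2 : (2 : R) ∣ (x ^ (2 ^ k) + y ^ (2 ^ k) + z ^ (2 ^ k)) ^ 2
          - ((x ^ (2 ^ k)) ^ 2 + (y ^ (2 ^ k)) ^ 2 + (z ^ (2 ^ k)) ^ 2) :=
        ⟨x ^ (2 ^ k) * y ^ (2 ^ k) + x ^ (2 ^ k) * z ^ (2 ^ k) + y ^ (2 ^ k) * z ^ (2 ^ k),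
          by ring⟩
      have h3 := dvd_add h1 h2
      rw [sub_add_sub_cancel] at h3
      rw [pow_succ 2 k, pow_mul, pow_mul, pow_mul, pow_mul]
      exact h3

set_option maxHeartbeats 1000000 in
/-- For every `n : ℕ`, with `r = 2^n`, in the polynomial ring
`ℤ[v, s₁, s₂, u₁, u₂]` (with `v = X 0`, `s₁ = X 1`, `s₂ = X 2`, `u₁ = X 3`, `u₂ = X 4`),
the element `(s₂ − s₁·u₁² + v·s₁·u₁ + u₂)^(2^(n+4))` minus the indicated sum lies in
the ideal generated by `8` and `v⁴`. -/
theorem t2_power_expansion_mod_eight_v_four (n r : ℕ) (hr : r = 2 ^ n) :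
    ((X 2 - X 1 * (X 3) ^ 2 + X 0 * X 1 * X 3 + X 4 : MvPolynomial (Fin 5) ℤ) ^ (2 ^ (n + 4))
        - ((X 2) ^ (16 * r)
          + 4 * (X 1) ^ (4 * r) * (X 2) ^ (12 * r) * (X 3) ^ (8 * r)
          + 4 * (X 2) ^ (12 * r) * (X 4) ^ (4 * r)
          + 6 * (X 1) ^ (8 * r) * (X 2) ^ (8 * r) * (X 3) ^ (16 * r)
          + 4 * (X 1) ^ (4 * r) * (X 2) ^ (8 * r) * (X 3) ^ (8 * r) * (X 4) ^ (4 * r)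
          + 6 * (X 2) ^ (8 * r) * (X 4) ^ (8 * r)
          + 4 * (X 1) ^ (12 * r) * (X 2) ^ (4 * r) * (X 3) ^ (24 * r)
          + 4 * (X 1) ^ (8 * r) * (X 2) ^ (4 * r) * (X 3) ^ (16 * r) * (X 4) ^ (4 * r)
          + 4 * (X 1) ^ (4 * r) * (X 2) ^ (4 * r) * (X 3) ^ (8 * r) * (X 4) ^ (8 * r)
          + 4 * (X 2) ^ (4 * r) * (X 4) ^ (12 * r)
          + (X 1) ^ (16 * r) * (X 3) ^ (32 * r)
          + 4 * (X 1) ^ (12 * r) * (X 3) ^ (24 * r) * (X 4) ^ (4 * r)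
          + 6 * (X 1) ^ (8 * r) * (X 3) ^ (16 * r) * (X 4) ^ (8 * r)
          + 4 * (X 1) ^ (4 * r) * (X 3) ^ (8 * r) * (X 4) ^ (12 * r)
          + (X 4) ^ (16 * r)))
      ∈ Ideal.span {(8 : MvPolynomial (Fin 5) ℤ), (X 0) ^ 4} := by
  set I : Ideal (MvPolynomial (Fin 5) ℤ) := Ideal.span {(8 : MvPolynomial (Fin 5) ℤ), (X 0) ^ 4} with hI
  set T : MvPolynomial (Fin 5) ℤ := ((X 2) ^ (16 * r)
          + 4 * (X 1) ^ (4 * r) * (X 2) ^ (12 * r) * (X 3) ^ (8 * r)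
          + 4 * (X 2) ^ (12 * r) * (X 4) ^ (4 * r)
          + 6 * (X 1) ^ (8 * r) * (X 2) ^ (8 * r) * (X 3) ^ (16 * r)
          + 4 * (X 1) ^ (4 * r) * (X 2) ^ (8 * r) * (X 3) ^ (8 * r) * (X 4) ^ (4 * r)
          + 6 * (X 2) ^ (8 * r) * (X 4) ^ (8 * r)
          + 4 * (X 1) ^ (12 * r) * (X 2) ^ (4 * r) * (X 3) ^ (24 * r)
          + 4 * (X 1) ^ (8 * r) * (X 2) ^ (4 * r) * (X 3) ^ (16 * r) * (X 4) ^ (4 * r)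
          + 4 * (X 1) ^ (4 * r) * (X 2) ^ (4 * r) * (X 3) ^ (8 * r) * (X 4) ^ (8 * r)
          + 4 * (X 2) ^ (4 * r) * (X 4) ^ (12 * r)
          + (X 1) ^ (16 * r) * (X 3) ^ (32 * r)
          + 4 * (X 1) ^ (12 * r) * (X 3) ^ (24 * r) * (X 4) ^ (4 * r)
          + 6 * (X 1) ^ (8 * r) * (X 3) ^ (16 * r) * (X 4) ^ (8 * r)
          + 4 * (X 1) ^ (4 * r) * (X 3) ^ (8 * r) * (X 4) ^ (12 * r)
          + (X 4) ^ (16 * r)) with hT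
  rw [← Ideal.Quotient.eq_zero_iff_mem]
  set φ : MvPolynomial (Fin 5) ℤ →+* MvPolynomial (Fin 5) ℤ ⧸ I := Ideal.Quotient.mk I with hφ
  -- basic facts in the quotient
  have h8 : (8 : MvPolynomial (Fin 5) ℤ ⧸ I) = 0 := by
    rw [show (8 : MvPolynomial (Fin 5) ℤ ⧸ I) = φ (8 : MvPolynomial (Fin 5) ℤ) by push_cast; rfl]
    exact Ideal.Quotient.eq_zero_iff_mem.2 (Ideal.subset_span (by simp))
  have hv : φ ((X 0) ^ 4) = 0 :=
    Ideal.Quotient.eq_zero_iff_mem.2 (Ideal.subset_span (by simp))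
  set a : MvPolynomial (Fin 5) ℤ ⧸ I := φ (X 2 - X 1 * (X 3) ^ 2 + X 4) with ha
  set b : MvPolynomial (Fin 5) ℤ ⧸ I := φ (X 0 * X 1 * X 3) with hb
  have hb4 : b ^ 4 = 0 := by
    rw [hb, ← map_pow, show (X 0 * X 1 * X 3 : MvPolynomial (Fin 5) ℤ) ^ 4 = (X 0) ^ 4 * ((X 1) ^ 4 * (X 3) ^ 4)
      from by ring, map_mul, hv, zero_mul]
  set d : MvPolynomial (Fin 5) ℤ ⧸ I := 4 * a ^ 3 * b + 6 * a ^ 2 * b ^ 2 + 4 * a * b ^ 3 with hd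
  have hd2 : d ^ 2 = 0 := by
    rw [hd]
    linear_combination (2 * a ^ 6 * b ^ 2 + 6 * a ^ 5 * b ^ 3) * h8
      + (68 * a ^ 4 + 48 * a ^ 3 * b + 16 * a ^ 2 * b ^ 2) * hb4
  -- exponent bookkeeping
  have hr1 : 1 ≤ r := hr ▸ Nat.one_le_two_pow
  have h4r : 4 * r = 2 ^ (n + 2) := by subst hr; rw [pow_add]; ring
  have h16r : 16 * r = 2 ^ (n + 4) := by subst hr; rw [pow_add]; ring
  -- the key divisibility in R
  have hA : (2 : MvPolynomial (Fin 5) ℤ) ∣ (X 2 - X 1 * (X 3) ^ 2 + X 4)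
      - (X 2 + X 1 * (X 3) ^ 2 + X 4) := ⟨-(X 1 * (X 3) ^ 2), by ring⟩
  have hF := frob3 hA (n + 2)
  rw [← h4r] at hF
  have hF4 := eight_dvd_pow_four hF
  have hT8 : (8 : MvPolynomial (Fin 5) ℤ) ∣ ((X 2) ^ (4 * r) + (X 1 * (X 3) ^ 2) ^ (4 * r)
      + (X 4) ^ (4 * r)) ^ 4 - T := by
    refine ⟨(X 2) ^ (8 * r) * (X 1) ^ (4 * r) * (X 3) ^ (8 * r) * (X 4) ^ (4 * r)
      + (X 2) ^ (4 * r) * (X 1) ^ (8 * r) * (X 3) ^ (16 * r) * (X 4) ^ (4 * r)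
      + (X 2) ^ (4 * r) * (X 1) ^ (4 * r) * (X 3) ^ (8 * r) * (X 4) ^ (8 * r), ?_⟩
    rw [hT]; ring
  have hdvd : (8 : MvPolynomial (Fin 5) ℤ) ∣ (X 2 - X 1 * (X 3) ^ 2 + X 4) ^ (16 * r) - T := by
    have := dvd_add hF4 hT8
    rw [sub_add_sub_cancel, ← pow_mul, show 4 * r * 4 = 16 * r from by ring] at this
    exact this
  -- transfer to the quotient
  have key2 : a ^ (16 * r) = φ T := by
    obtain ⟨c, hc⟩ := hdvd
    have : φ ((X 2 - X 1 * (X 3) ^ 2 + X 4) ^ (16 * r) - T) = 0 := by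
      rw [hc, map_mul, show φ (8 : MvPolynomial (Fin 5) ℤ) = (8 : MvPolynomial (Fin 5) ℤ ⧸ I) from by push_cast; rfl, h8, zero_mul]
    rw [map_sub, map_pow, sub_eq_zero] at this
    exact this
  -- compute (a + b)^(2^(n+4)) = a^(16 r)
  have key : (a + b) ^ (2 ^ (n + 4)) = a ^ (16 * r) := by
    obtain ⟨m, hm⟩ : ∃ m, 4 * r = m + 1 := ⟨4 * r - 1, by omega⟩
    have habd : (a + b) ^ 4 = a ^ 4 + d := by rw [hd]; linear_combination hb4
    have hzero : ((4 * r : ℕ) : MvPolynomial (Fin 5) ℤ ⧸ I) * (a ^ 4) ^ m * d = 0 := by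
      rw [hd]
      push_cast
      linear_combination ((r : MvPolynomial (Fin 5) ℤ ⧸ I) * (a ^ 4) ^ m
        * (2 * a ^ 3 * b + 3 * a ^ 2 * b ^ 2 + 2 * a * b ^ 3)) * h8
    calc (a + b) ^ (2 ^ (n + 4)) = ((a + b) ^ 4) ^ (4 * r) := by
          rw [← pow_mul, show 4 * (4 * r) = 2 ^ (n + 4) from by omega]
      _ = (a ^ 4 + d) ^ (m + 1) := by rw [habd, hm]
      _ = (a ^ 4) ^ (m + 1) + ((m + 1 : ℕ) : MvPolynomial (Fin 5) ℤ ⧸ I) * (a ^ 4) ^ m * d :=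
          sq_zero_pow _ _ hd2 (m)
      _ = (a ^ 4) ^ (m + 1) := by rw [← hm, hzero, add_zero]
      _ = a ^ (16 * r) := by rw [← pow_mul, hm.symm, show 4 * (4 * r) = 16 * r from by ring]
  -- finish
  have hsplit : (X 2 - X 1 * (X 3) ^ 2 + X 0 * X 1 * X 3 + X 4 : MvPolynomial (Fin 5) ℤ)
      = (X 2 - X 1 * (X 3) ^ 2 + X 4) + X 0 * X 1 * X 3 := by ring
  show φ _ = 0
  rw [map_sub, map_pow, hsplit, map_add, ← ha, ← hb, key, key2, sub_self]
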